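/- The unique root r₁(n) of P^{n,1} in (1,2) satisfies 1 < r₁(n) < (n-2)^{1/(n-1)} for n ≥ 6; consequently r₁(n) → 1 as n → ∞. -/

import Mathlib

open Finset Filter

/-- P^{n,1}(r) = r^{N-1} - Σ_{i=0}^{n-3} r^{N-n-i} with N = C(n,2). -/
noncomputable def Pform (n : ℕ) (r : ℝ) : ℝ :=
  r ^ (n * (n - 1) / 2 - 1)
    - ∑ i ∈ Finset.range (n - 2), r ^ (n * (n - 1) / 2 - n - i)

lemma pform_pow_lt (n : ℕ) (hn : 6 ≤ n) (r : ℝ) (hr : r ∈ Set.Ioo (1 : ℝ) 2)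
    (hP : Pform n r = 0) : r ^ (n - 1) < (n : ℝ) - 2 := by
  obtain ⟨h1r, _⟩ := hr
  set N := n * (n - 1) / 2 with hNdef
  have h2N : 2 * N = n * (n - 1) := by
    rw [hNdef]
    apply Nat.two_mul_div_two_of_even
    obtain ⟨m, rfl⟩ : ∃ m, n = m + 1 := ⟨n - 1, by omega⟩
    simpa [Nat.mul_comm] using Nat.even_mul_succ_self m
  have hNn : n + 1 ≤ N := by
    obtain ⟨m, rfl⟩ : ∃ m, n = m + 6 := ⟨n - 6, by omega⟩
    have h2N' : 2 * N = (m + 6) * (m + 5) := by rw [h2N]; congr 1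
    nlinarith
  have hr0 : (0 : ℝ) < r := by linarith
  have hsum : r ^ (N - 1) = ∑ i ∈ Finset.range (n - 2), r ^ (N - n - i) := by
    have := hP
    unfold Pform at this
    rw [← hNdef] at this
    linarith
  have hlt : ∑ i ∈ Finset.range (n - 2), r ^ (N - n - i)
      < (n - 2 : ℕ) * r ^ (N - n) := by
    have := Finset.sum_lt_sum (s := Finset.range (n - 2))
      (f := fun i => r ^ (N - n - i)) (g := fun _ => r ^ (N - n))
      (fun i _ => pow_le_pow_right₀ (le_of_lt h1r) (by omega))
      ⟨1, Finset.mem_range.2 (by omega), pow_lt_pow_right₀ h1r (by omega)⟩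
    simpa [Finset.sum_const, Finset.card_range, nsmul_eq_mul] using this
  have hsplit : r ^ (N - 1) = r ^ (n - 1) * r ^ (N - n) := by
    rw [← pow_add]; congr 1; omega
  have hpos : (0 : ℝ) < r ^ (N - n) := pow_pos hr0 _
  have hmain : r ^ (n - 1) * r ^ (N - n) < ((n - 2 : ℕ) : ℝ) * r ^ (N - n) := by
    rw [← hsplit, hsum]; exact hlt
  have : r ^ (n - 1) < ((n - 2 : ℕ) : ℝ) := lt_of_mul_lt_mul_right hmain (le_of_lt hpos)
  have hcast : ((n - 2 : ℕ) : ℝ) = (n : ℝ) - 2 := by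
    rw [Nat.cast_sub (by omega)]; norm_num
  linarith [hcast ▸ this]

lemma pform_root_lt (n : ℕ) (hn : 6 ≤ n) (r : ℝ) (hr : r ∈ Set.Ioo (1 : ℝ) 2)
    (hP : Pform n r = 0) :
    r < ((n : ℝ) - 2) ^ ((1 : ℝ) / ((n : ℝ) - 1)) := by
  have key := pform_pow_lt n hn r hr hP
  have hr0 : (0 : ℝ) < r := lt_trans one_pos hr.1
  have ha : (0 : ℝ) < (n : ℝ) - 1 := by
    have : (6 : ℝ) ≤ (n : ℝ) := by exact_mod_cast hn
    linarith
  have hz : (0 : ℝ) < 1 / ((n : ℝ) - 1) := by positivity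
  have hpowcast : r ^ (n - 1) = r ^ ((n : ℝ) - 1) := by
    rw [← Real.rpow_natCast r (n - 1)]
    congr 1
    rw [Nat.cast_sub (by omega)]; norm_num
  have hlt : r ^ ((n : ℝ) - 1) < (n : ℝ) - 2 := hpowcast ▸ key
  have := Real.rpow_lt_rpow (Real.rpow_nonneg (le_of_lt hr0) _) hlt hz
  rwa [← Real.rpow_mul (le_of_lt hr0), mul_one_div, div_self (ne_of_gt ha),
    Real.rpow_one] at this

lemma bound_tendsto :
    Tendsto (fun n : ℕ => ((n : ℝ) - 2) ^ ((1 : ℝ) / ((n : ℝ) - 1)))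
      atTop (nhds 1) := by
  have h1 : Tendsto (fun x : ℝ => Real.log (x - 2) / (x - 2)) atTop (nhds 0) := by
    have hlo : Tendsto (fun y : ℝ => Real.log y / y) atTop (nhds 0) := by
      simpa [id] using Real.isLittleO_log_id_atTop.tendsto_div_nhds_zero
    have hc : Tendsto (fun x : ℝ => x - 2) atTop atTop :=
      tendsto_atTop_add_const_right atTop (-2) tendsto_id
    exact hlo.comp hc
  have h2 : Tendsto (fun x : ℝ => (x - 2) / (x - 1)) atTop (nhds 1) := by
    have hinv : Tendsto (fun x : ℝ => 1 - 1 / (x - 1)) atTop (nhds 1) := by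
      have : Tendsto (fun x : ℝ => 1 / (x - 1)) atTop (nhds 0) := by
        have hc : Tendsto (fun x : ℝ => x - 1) atTop atTop :=
          tendsto_atTop_add_const_right atTop (-1) tendsto_id
        simpa [Function.comp_def, one_div] using tendsto_inv_atTop_zero.comp hc
      simpa using tendsto_const_nhds.sub this
    apply hinv.congr'
    filter_upwards [eventually_ge_atTop (3 : ℝ)] with x hx
    have hx1 : x - 1 ≠ 0 := by linarith
    field_simp
    ring
  have hlog : Tendsto (fun x : ℝ => Real.log (x - 2) / (x - 1)) atTop (nhds 0) := by
    have hmul := h1.mul h2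
    rw [zero_mul] at hmul
    apply hmul.congr'
    filter_upwards [eventually_ge_atTop (3 : ℝ)] with x hx
    have hx2 : x - 2 ≠ 0 := by linarith
    field_simp
  have hlogN : Tendsto (fun n : ℕ => Real.log ((n : ℝ) - 2) / ((n : ℝ) - 1))
      atTop (nhds 0) := hlog.comp tendsto_natCast_atTop_atTop
  have hexp := (Real.continuous_exp.tendsto 0).comp hlogN
  rw [Real.exp_zero] at hexp
  apply hexp.congr'
  filter_upwards [eventually_ge_atTop (3 : ℕ)] with n hn
  have hpos : (0 : ℝ) < (n : ℝ) - 2 := by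
    have : (3 : ℝ) ≤ (n : ℝ) := by exact_mod_cast hn
    linarith
  simp only [Function.comp]
  rw [Real.rpow_def_of_pos hpos, mul_one_div]

/-- For n ≥ 6, any root r₁(n) of P^{n,1} in (1,2) satisfies
1 < r₁(n) < (n-2)^{1/(n-1)}; consequently r₁(n) → 1 as n → ∞. -/
theorem stmt_9 :
    (∀ n : ℕ, 6 ≤ n → ∀ r : ℝ, r ∈ Set.Ioo (1 : ℝ) 2 → Pform n r = 0 →
      1 < r ∧ r < ((n : ℝ) - 2) ^ ((1 : ℝ) / ((n : ℝ) - 1))) ∧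
    (∀ ρ : ℕ → ℝ,
      (∀ n : ℕ, 6 ≤ n → ρ n ∈ Set.Ioo (1 : ℝ) 2 ∧ Pform n (ρ n) = 0) →
      Tendsto ρ atTop (nhds 1)) := by
  constructor
  · intro n hn r hr hP
    exact ⟨hr.1, pform_root_lt n hn r hr hP⟩
  · intro ρ hρ
    apply tendsto_of_tendsto_of_tendsto_of_le_of_le' tendsto_const_nhds bound_tendsto
    · filter_upwards [eventually_ge_atTop 6] with n hn
      exact le_of_lt (hρ n hn).1.1
    · filter_upwards [eventually_ge_atTop 6] with n hn
      exact le_of_lt (pform_root_lt n hn (ρ n) (hρ n hn).1 (hρ n hn).2)
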